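/- Assume n ≤ m. If π* is an optimal allocation, then for every agent i it holds that μ − v_max < V_i(π*) < μ + v_max. -/
import Mathlib

/-- The valuation of agent `i` under allocation `π`: the sum of utilities of goods assigned to `i`. -/
def V {G A : Type*} [Fintype G] [DecidableEq A] (v : G → ℝ) (π : G → A) (i : A) : ℝ :=
  ∑ j ∈ Finset.univ.filter (fun j => π j = i), v j

/-- Nash social welfare: geometric mean of agents' valuations. -/
noncomputable def NSW {G A : Type*} [Fintype G] [Fintype A] [DecidableEq A]
    (v : G → ℝ) (π : G → A) : ℝ :=
  (∏ i, V v π i) ^ ((1 : ℝ) / (Fintype.card A))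

open Finset

lemma V_nonneg {n m : ℕ} (v : Fin m → ℝ) (hv : ∀ j, 0 < v j) (π : Fin m → Fin n) (i : Fin n) :
    0 ≤ V v π i :=
  Finset.sum_nonneg fun j _ => (hv j).le

lemma sum_V {n m : ℕ} (v : Fin m → ℝ) (π : Fin m → Fin n) :
    ∑ i, V v π i = ∑ j, v j := by
  unfold V; rw [Finset.sum_fiberwise]

lemma V_update_tgt {n m : ℕ} (v : Fin m → ℝ) (πs : Fin m → Fin n) (j0 : Fin m) (b : Fin n)
    (hb : πs j0 ≠ b) :
    V v (Function.update πs j0 b) b = v j0 + V v πs b := by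
  unfold V
  have hfe : Finset.univ.filter (fun j => Function.update πs j0 b j = b)
      = insert j0 (Finset.univ.filter (fun j => πs j = b)) := by
    ext j
    by_cases h : j = j0 <;> simp [Function.update_apply, h]
  rw [hfe, Finset.sum_insert (by simp [hb])]

lemma V_update_src {n m : ℕ} (v : Fin m → ℝ) (πs : Fin m → Fin n) (j0 : Fin m) (b : Fin n)
    (hb : πs j0 ≠ b) :
    V v (Function.update πs j0 b) (πs j0) = V v πs (πs j0) - v j0 := by
  unfold V
  have hfe : Finset.univ.filter (fun j => Function.update πs j0 b j = πs j0)
      = (Finset.univ.filter (fun j => πs j = πs j0)).erase j0 := by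
    ext j
    by_cases h : j = j0 <;> simp [Function.update_apply, h, Ne.symm hb, hb]
  rw [hfe, Finset.sum_erase_eq_sub (by simp)]

lemma V_update_other {n m : ℕ} (v : Fin m → ℝ) (πs : Fin m → Fin n) (j0 : Fin m) (b l : Fin n)
    (hla : l ≠ πs j0) (hlb : l ≠ b) :
    V v (Function.update πs j0 b) l = V v πs l := by
  unfold V
  congr 1
  ext j
  by_cases h : j = j0 <;> simp [Function.update_apply, h, Ne.symm hla, Ne.symm hlb]

lemma improve {n m : ℕ} (hn : 0 < n) (v : Fin m → ℝ) (hv : ∀ j, 0 < v j)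
    (πs : Fin m → Fin n) (hpos : ∀ l, 0 < V v πs l)
    (j0 : Fin m) (b : Fin n) (hb : πs j0 ≠ b)
    (hgain : v j0 < V v πs (πs j0) - V v πs b) :
    NSW v πs < NSW v (Function.update πs j0 b) := by
  set a := πs j0 with ha
  set π' := Function.update πs j0 b with hπ'
  have hba : b ≠ a := Ne.symm hb
  have hmem : b ∈ Finset.univ.erase a := Finset.mem_erase.2 ⟨hba, Finset.mem_univ b⟩
  have key : ∀ f : Fin n → ℝ, ∏ l, f l = f a * (f b * ∏ l ∈ (Finset.univ.erase a).erase b, f l) := by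
    intro f
    rw [Finset.mul_prod_erase _ _ hmem, Finset.mul_prod_erase _ _ (Finset.mem_univ a)]
  have hR : 0 < ∏ l ∈ (Finset.univ.erase a).erase b, V v πs l :=
    Finset.prod_pos fun l _ => hpos l
  have hRe : ∏ l ∈ (Finset.univ.erase a).erase b, V v π' l
      = ∏ l ∈ (Finset.univ.erase a).erase b, V v πs l := by
    refine Finset.prod_congr rfl fun l hl => ?_
    have h1 := Finset.mem_erase.1 hl
    exact V_update_other v πs j0 b l (Finset.mem_erase.1 h1.2).1 h1.1
  have hPlt : ∏ l, V v πs l < ∏ l, V v π' l := by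
    rw [key (V v πs), key (V v π'), hRe,
      V_update_src v πs j0 b hb, V_update_tgt v πs j0 b hb]
    have h2 : 0 < v j0 * (V v πs a - V v πs b - v j0) := mul_pos (hv j0) (by linarith)
    nlinarith [mul_pos h2 hR]
  have hP : 0 < ∏ l, V v πs l := Finset.prod_pos fun l _ => hpos l
  unfold NSW
  rw [Fintype.card_fin]
  have he : (0:ℝ) < 1 / n := by positivity
  exact Real.rpow_lt_rpow hP.le hPlt he

theorem stmt1 (n m : ℕ) (hn : 0 < n) (hnm : n ≤ m)
    (v : Fin m → ℝ) (hv : ∀ j, 0 < v j)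
    (vmax : ℝ) (hvmax : IsGreatest (Set.range v) vmax)
    (πs : Fin m → Fin n)
    (hopt : ∀ π : Fin m → Fin n, NSW v π ≤ NSW v πs)
    (i : Fin n) :
    (∑ j, v j) / n - vmax < V v πs i ∧ V v πs i < (∑ j, v j) / n + vmax := by
  set μ : ℝ := (∑ j, v j) / n with hμ
  have hvmax_pos : 0 < vmax := by
    obtain ⟨j, hj⟩ := hvmax.1
    exact hj ▸ hv j
  have hle : ∀ j, v j ≤ vmax := fun j => hvmax.2 ⟨j, rfl⟩
  -- an allocation with positive NSW
  have hNSWpos : 0 < NSW v πs := by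
    set π0 : Fin m → Fin n := fun j => ⟨j % n, Nat.mod_lt _ hn⟩ with hπ0
    have hπ0pos : ∀ l, 0 < V v π0 l := by
      intro l
      refine Finset.sum_pos (fun j _ => hv j) ⟨⟨l, lt_of_lt_of_le l.isLt hnm⟩, ?_⟩
      simp [hπ0, Nat.mod_eq_of_lt l.isLt, Fin.ext_iff]
    have h0 : 0 < NSW v π0 := by
      unfold NSW
      exact Real.rpow_pos_of_pos (Finset.prod_pos fun l _ => hπ0pos l) _
    exact lt_of_lt_of_le h0 (hopt π0)
  have hpos : ∀ l, 0 < V v πs l := by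
    intro l
    rcases (V_nonneg v hv πs l).lt_or_eq with h | h
    · exact h
    · exfalso
      have : (∏ l', V v πs l') = 0 := Finset.prod_eq_zero (Finset.mem_univ l) h.symm
      unfold NSW at hNSWpos
      rw [this, Real.zero_rpow (by rw [Fintype.card_fin]; positivity : (1:ℝ)/(Fintype.card (Fin n)) ≠ 0)] at hNSWpos
      exact lt_irrefl 0 hNSWpos
  have hsum : ∑ l, V v πs l = n * μ := by
    rw [sum_V, hμ]
    field_simp
  have hne : (Finset.univ : Finset (Fin n)).Nonempty := ⟨i, Finset.mem_univ i⟩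
  have fiber_nonempty : ∀ l, 0 < V v πs l → ∃ j, πs j = l := by
    intro l hl
    by_contra h
    push_neg at h
    have : V v πs l = 0 := by
      unfold V
      rw [Finset.filter_false_of_mem (fun j _ => h j), Finset.sum_empty]
    linarith
  constructor
  · -- lower bound
    by_contra hcon
    push_neg at hcon
    have hVi : V v πs i ≤ μ - vmax := by linarith
    -- exists k with μ < V k
    have hk : ∃ k, μ < V v πs k := by
      by_contra h
      push_neg at h
      have : ∑ l, V v πs l < ∑ _l : Fin n, μ :=
        Finset.sum_lt_sum (fun l _ => h l) ⟨i, Finset.mem_univ i, by linarith⟩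
      rw [hsum, Finset.sum_const, Finset.card_univ, Fintype.card_fin, nsmul_eq_mul] at this
      linarith
    obtain ⟨k, hkμ⟩ := hk
    obtain ⟨j0, hj0⟩ := fiber_nonempty k (hpos k)
    have hki : k ≠ i := fun h => by rw [h] at hkμ; linarith
    have : NSW v πs < NSW v (Function.update πs j0 i) := by
      refine improve hn v hv πs hpos j0 i (hj0 ▸ hki) ?_
      rw [hj0]
      have := hle j0
      linarith
    exact absurd (hopt _) (not_le.2 this)
  · -- upper bound
    by_contra hcon
    push_neg at hcon
    have hVi : μ + vmax ≤ V v πs i := hcon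
    have hk : ∃ k, V v πs k < μ := by
      by_contra h
      push_neg at h
      have : ∑ _l : Fin n, μ < ∑ l, V v πs l :=
        Finset.sum_lt_sum (fun l _ => h l) ⟨i, Finset.mem_univ i, by linarith⟩
      rw [hsum, Finset.sum_const, Finset.card_univ, Fintype.card_fin, nsmul_eq_mul] at this
      linarith
    obtain ⟨k, hkμ⟩ := hk
    obtain ⟨j0, hj0⟩ := fiber_nonempty i (hpos i)
    have hik : i ≠ k := fun h => by rw [h] at hVi; linarith
    have : NSW v πs < NSW v (Function.update πs j0 k) := by
      refine improve hn v hv πs hpos j0 k (hj0 ▸ hik) ?_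
      rw [hj0]
      have := hle j0
      linarith
    exact absurd (hopt _) (not_le.2 this)
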